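/- For fixed z ∈ [0, e-1] and x ≥ 0, the infimum over ξ ∈ (0, z] and λ ∈ (0, 1/(1+ξ)) of (x - ln(1 - λ(1+ξ)))/λ + (1+ξ)·ln(2ζ(2)/(ln(1+ξ))²) equals 2·h̃_{1+z}((h⁻¹(1+x) + ln(2ζ(2)))/2). -/

import Mathlib

/-- `h̃_z(x)`: the infimum over `y ∈ (1, z]` of `y (x - ln ln y)`. -/
noncomputable def htilde3 (z x : ℝ) : ℝ :=
  sInf ((fun y => y * (x - Real.log (Real.log y))) '' Set.Ioc 1 z)

/-- For fixed `z ∈ [0, e-1]` and `x ≥ 0`, the infimum over `ξ ∈ (0, z]` and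
`λ ∈ (0, 1/(1+ξ))` of `(x - ln(1 - λ(1+ξ)))/λ + (1+ξ) ln(2ζ(2)/(ln(1+ξ))²)`
equals `2 h̃_{1+z}((h⁻¹(1+x) + ln(2ζ(2)))/2)`, where `ζ(2) = π²/6` and `h(u) = u - ln u`
with inverse `hinv`. -/
theorem stmt3 (z x : ℝ) (hz : z ∈ Set.Icc (0:ℝ) (Real.exp 1 - 1)) (hx : 0 ≤ x)
    (hinv : ℝ → ℝ)
    (hinv1 : ∀ y ≥ (1:ℝ), 1 ≤ hinv y ∧ hinv y - Real.log (hinv y) = y) :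
    sInf {v : ℝ | ∃ ξ ∈ Set.Ioc (0:ℝ) z, ∃ l ∈ Set.Ioo (0:ℝ) (1/(1+ξ)),
        v = (x - Real.log (1 - l*(1+ξ)))/l
            + (1+ξ) * Real.log (2*(Real.pi^2/6)/(Real.log (1+ξ))^2)} =
      2 * htilde3 (1+z) ((hinv (1+x) + Real.log (2*(Real.pi^2/6)))/2) := by
  obtain ⟨hz0, hze⟩ := hz
  set C : ℝ := 2*(Real.pi^2/6) with hCdef
  obtain ⟨hu1, huh⟩ := hinv1 (1+x) (by linarith)
  set u : ℝ := hinv (1+x) with hudef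
  have hC1 : (1:ℝ) < C := by
    have h3 := Real.pi_gt_three
    rw [hCdef]; nlinarith [Real.pi_pos]
  have hC0 : (0:ℝ) < C := by linarith
  have hlogC : 0 < Real.log C := Real.log_pos hC1
  set X : ℝ := (u + Real.log C)/2 with hXdef
  clear_value C u X
  have hXpos : 0 < X := by rw [hXdef]; linarith
  rcases eq_or_lt_of_le hz0 with hz0' | hzpos
  · -- z = 0 : both sides are sInf ∅ = 0
    subst hz0'
    have h1 : {v : ℝ | ∃ ξ ∈ Set.Ioc (0:ℝ) (0:ℝ), ∃ l ∈ Set.Ioo (0:ℝ) (1/(1+ξ)),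
        v = (x - Real.log (1 - l*(1+ξ)))/l + (1+ξ) * Real.log (C/(Real.log (1+ξ))^2)}
        = (∅ : Set ℝ) := by
      ext v; simp
    have h2 : (fun y => y * (X - Real.log (Real.log y))) '' Set.Ioc (1:ℝ) (1+0) = ∅ := by
      norm_num
    rw [h1, htilde3, h2, Real.sInf_empty]
    ring
  -- main case z > 0
  set S : Set ℝ := (fun y => y * (X - Real.log (Real.log y))) '' Set.Ioc 1 (1+z) with hSdef
  set A : Set ℝ := {v : ℝ | ∃ ξ ∈ Set.Ioc (0:ℝ) z, ∃ l ∈ Set.Ioo (0:ℝ) (1/(1+ξ)),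
        v = (x - Real.log (1 - l*(1+ξ)))/l + (1+ξ) * Real.log (C/(Real.log (1+ξ))^2)} with hAdef
  -- basic facts about y ∈ (1, 1+z]
  have yfacts : ∀ y : ℝ, 1 < y → y ≤ 1 + z →
      0 < Real.log y ∧ Real.log (Real.log y) ≤ 0 ∧
      y * Real.log (C/(Real.log y)^2) = y * (Real.log C - 2 * Real.log (Real.log y)) := by
    intro y hy1 hy2
    have hy0 : 0 < y := by linarith
    have hlogy : 0 < Real.log y := Real.log_pos hy1
    have hylee : y ≤ Real.exp 1 := by linarith
    have hlogy1 : Real.log y ≤ 1 := by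
      rw [Real.log_le_iff_le_exp hy0]; exact hylee
    refine ⟨hlogy, Real.log_nonpos (le_of_lt hlogy) hlogy1, ?_⟩
    rw [Real.log_div (ne_of_gt hC0) (pow_ne_zero 2 (ne_of_gt hlogy)), Real.log_pow]
    push_cast; ring
  -- pointwise lower bound on elements of A
  have main_lb : ∀ a ∈ A, ∃ y, (1 < y ∧ y ≤ 1 + z) ∧
      2 * (y * (X - Real.log (Real.log y))) ≤ a := by
    rintro a ⟨ξ, ⟨hξ0, hξz⟩, l, ⟨hl0, hl1⟩, rfl⟩
    set y : ℝ := 1 + ξ with hydef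
    clear_value y
    have hy1 : 1 < y := by rw [hydef]; linarith
    have hy2 : y ≤ 1 + z := by rw [hydef]; linarith
    have hy0 : 0 < y := by linarith
    obtain ⟨hlogy, hlly, hterm2⟩ := yfacts y hy1 hy2
    refine ⟨y, ⟨hy1, hy2⟩, ?_⟩
    have hly : l * y < 1 := by
      rw [lt_div_iff₀ hy0] at hl1; exact hl1
    have ht0 : 0 < 1 - l * y := by linarith
    have hfirst : y * u ≤ (x - Real.log (1 - l*y))/l := by
      rw [le_div_iff₀ hl0]
      have hu0 : 0 < u := by linarith
      have key := Real.log_le_sub_one_of_pos (mul_pos hu0 ht0)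
      rw [Real.log_mul (ne_of_gt hu0) (ne_of_gt ht0)] at key
      nlinarith [key, huh]
    have hXe : 2 * (y * (X - Real.log (Real.log y)))
        = y * u + y * (Real.log C - 2 * Real.log (Real.log y)) := by
      rw [hXdef]; ring
    linarith [hfirst, hterm2, hXe]
  -- approximate attainment
  have main_ub : ∀ y : ℝ, 1 < y → y ≤ 1 + z → ∀ ε : ℝ, 0 < ε →
      ∃ a ∈ A, a ≤ 2 * (y * (X - Real.log (Real.log y))) + ε := by
    intro y hy1 hy2 ε hε
    have hy0 : 0 < y := by linarith
    obtain ⟨hlogy, hlly, hterm2⟩ := yfacts y hy1 hy2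
    have hξ : y - 1 ∈ Set.Ioc (0:ℝ) z := ⟨by linarith, by linarith⟩
    have hyy : 1 + (y - 1) = y := by ring
    rcases eq_or_lt_of_le hu1 with hu1' | hu1'
    · -- u = 1, so x = 0; take l small
      have hx0 : x = 0 := by
        rw [← hu1', Real.log_one] at huh; linarith
      set l : ℝ := ε/(y*(y+ε)) with hldef
      have hl0 : 0 < l := by positivity
      have hly : l * y = ε/(y+ε) := by
        rw [hldef]; field_simp
      have hly1 : l * y < 1 := by
        rw [hly, div_lt_one (by linarith)]; linarith
      have ht0 : 0 < 1 - l * y := by linarith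
      refine ⟨(x - Real.log (1 - l*(1+(y-1))))/l + (1+(y-1)) * Real.log (C/(Real.log (1+(y-1)))^2),
        ⟨y - 1, hξ, l, ⟨hl0, by rw [hyy, lt_div_iff₀ hy0]; exact hly1⟩, rfl⟩, ?_⟩
      rw [hyy]
      have hlog_bound : - Real.log (1 - l*y) ≤ l*y/(1 - l*y) := by
        have h := Real.log_le_sub_one_of_pos (show (0:ℝ) < (1 - l*y)⁻¹ by positivity)
        rw [Real.log_inv] at h
        have : (1 - l*y)⁻¹ - 1 = l*y/(1-l*y) := by field_simp; ring
        linarith [this ▸ h]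
      have hyne : y ≠ 0 := ne_of_gt hy0
      have hyεne : y + ε ≠ 0 := ne_of_gt (by linarith)
      have hfrac : l*y/(1 - l*y) = l * (y + ε) := by
        rw [hly, hldef]; field_simp; ring_nf; field_simp
      have hfirst : (x - Real.log (1 - l*y))/l ≤ y + ε := by
        rw [hx0]
        rw [div_le_iff₀ hl0]
        calc 0 - Real.log (1 - l*y) ≤ l * (y + ε) := by rw [← hfrac]; linarith [hlog_bound]
          _ = (y + ε) * l := by ring
      have hu1'' : u = 1 := hu1'.symm
      have hXe : 2 * (y * (X - Real.log (Real.log y)))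
          = y * u + y * (Real.log C - 2 * Real.log (Real.log y)) := by
        rw [hXdef]; ring
      have hyu : y * u = y := by rw [hu1'']; ring
      linarith [hfirst, hterm2, hXe, hyu]
    · -- u > 1 : exact minimizer
      set l : ℝ := (u - 1)/(u * y) with hldef
      have hu0 : (0:ℝ) < u := by linarith
      have hl0 : 0 < l := by
        rw [hldef]; exact div_pos (by linarith) (mul_pos (by linarith) hy0)
      have hune : u ≠ 0 := ne_of_gt hu0
      have hyne : y ≠ 0 := ne_of_gt hy0
      have hly : l * y = 1 - 1/u := by
        rw [hldef]; field_simp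
      have ht : 1 - l * y = 1/u := by rw [hly]; ring
      have hly1 : l * y < 1 := by
        rw [hly]; have : 0 < 1/u := by positivity
        linarith
      refine ⟨(x - Real.log (1 - l*(1+(y-1))))/l + (1+(y-1)) * Real.log (C/(Real.log (1+(y-1)))^2),
        ⟨y - 1, hξ, l, ⟨hl0, by rw [hyy, lt_div_iff₀ hy0]; exact hly1⟩, rfl⟩, ?_⟩
      rw [hyy]
      have hu1ne : u - 1 ≠ 0 := ne_of_gt (by linarith)
      have hfirst : (x - Real.log (1 - l*y))/l = y * u := by
        rw [ht, one_div, Real.log_inv]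
        have hxlog : x - -Real.log u = u - 1 := by linarith [huh]
        rw [hxlog, hldef]
        field_simp
      have hXe : 2 * (y * (X - Real.log (Real.log y)))
          = y * u + y * (Real.log C - 2 * Real.log (Real.log y)) := by
        rw [hXdef]; ring
      linarith [hfirst, hterm2, hXe, hε.le]
  -- S facts
  have hSne : S.Nonempty := ⟨_, ⟨1+z, ⟨by linarith, le_refl _⟩, rfl⟩⟩
  have hSlb : ∀ s ∈ S, X ≤ s := by
    rintro s ⟨y, ⟨hy1, hy2⟩, rfl⟩
    obtain ⟨hlogy, hlly, -⟩ := yfacts y hy1 hy2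
    have hnn : (0:ℝ) ≤ (y - 1) * (X - Real.log (Real.log y)) :=
      mul_nonneg (by linarith) (by linarith)
    simp only
    nlinarith [hnn]
  have hbddS : BddBelow S := ⟨X, hSlb⟩
  have hAlb : ∀ a ∈ A, 2 * sInf S ≤ a := by
    intro a ha
    obtain ⟨y, ⟨hy1, hy2⟩, hlb⟩ := main_lb a ha
    have hmem : y * (X - Real.log (Real.log y)) ∈ S := ⟨y, ⟨hy1, hy2⟩, rfl⟩
    have := csInf_le hbddS hmem
    linarith
  have hAne : A.Nonempty := by
    obtain ⟨a, ha, -⟩ := main_ub (1+z) (by linarith) (le_refl _) 1 one_pos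
    exact ⟨a, ha⟩
  have hbddA : BddBelow A := ⟨2 * sInf S, hAlb⟩
  rw [htilde3]
  refine le_antisymm ?_ (le_csInf hAne hAlb)
  -- sInf A ≤ 2 * sInf S
  have key : ∀ s ∈ S, sInf A ≤ 2 * s := by
    rintro s ⟨y, ⟨hy1, hy2⟩, rfl⟩
    refine le_of_forall_pos_le_add ?_
    intro ε hε
    obtain ⟨a, ha, hale⟩ := main_ub y hy1 hy2 ε hε
    exact le_trans (csInf_le hbddA ha) hale
  have : sInf A / 2 ≤ sInf S := by
    apply le_csInf hSne
    intro s hs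
    linarith [key s hs]
  linarith
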